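/- arXiv:1706.04882 — 4 statements merged into one kernel-verified Lean document; each statement's English description precedes it below -/
import Mathlib

section
/- Let (p,p') be a pair of coprime positive integers with p ≥ 2 and p' ≥ 2, set a = p'/p, let (r,s) ∈ K_{p,p'}, x ∈ ℂ, and ε,ε' ∈ {0,1}. Then for all (τ,u,t) ∈ ℍ×ℂ×ℂ one has T^{ε,ε'}_{r,s;x}(τ+1, u, t) = e^{2πi( a(x−iε/2)² + (rp'−sp)²/(4pp') − (1−ε)/8 )} · T^{ε, εε'+(1−ε)(1−ε')}_{r,s;x}(τ,u,t). -/
open Complex MeasureTheory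
open scoped Real

noncomputable section

/-- `e2 x = exp(2πi x)`. -/
def e2 (x : ℂ) : ℂ := Complex.exp (2 * (π : ℂ) * Complex.I * x)

/-- Dedekind dedekindEta function. -/
def dedekindEta (τ : ℂ) : ℂ := e2 (τ / 24) * ∏' n : ℕ, (1 - e2 (τ * (n + 1)))

/-- Jacobi theta with characteristics ε, ε' ∈ {0,1}. -/
def theta (ε ε' : ℕ) (u τ : ℂ) : ℂ :=
  e2 (u * ε / 2) * e2 (τ * ε / 8) *
    ∏' n : ℕ,
      ((1 - e2 (τ * (n + 1))) *
        (1 + (-1 : ℂ) ^ ε' * e2 u * e2 (τ * ((n + 1 : ℂ) - (1 - (ε : ℂ)) / 2))) *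
        (1 + (-1 : ℂ) ^ ε' * e2 (-u) * e2 (τ * ((n + 1 : ℂ) - (1 + (ε : ℂ)) / 2))))

/-- Normalized BPZ minimal-series character. -/
def chiBPZ (p p' r s : ℤ) (τ : ℂ) : ℂ :=
  (dedekindEta τ)⁻¹ * ∑' n : ℤ,
    (e2 (τ * ((p * p' : ℂ) * ((n : ℂ) + ((r * p' - s * p : ℤ) : ℂ) / (2 * p * p')) ^ 2)) -
     e2 (τ * ((p * p' : ℂ) * ((n : ℂ) + ((-r * p' - s * p : ℤ) : ℂ) / (2 * p * p')) ^ 2)))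

/-- The typical character function T^{ε,ε'}_{r,s;x}(τ,u,t). -/
def Tchar (p p' : ℤ) (ε ε' : ℕ) (r s : ℤ) (x : ℂ) (τ u t : ℂ) : ℂ :=
  (-1 : ℂ) ^ (ε * ε') *
    e2 (τ * (((p' : ℂ) / p) * (x - Complex.I * ε / 2) ^ 2)) *
    e2 (u * (2 * Complex.I * ((p' : ℂ) / p) * (x - Complex.I * ε / 2))) *
    e2 (t * (3 * (1 - 2 * ((p' : ℂ) / p)))) *
    theta ε ε' u τ / (dedekindEta τ) ^ 2 * chiBPZ p p' r s τ

/-- The index set K_{p,p'}. -/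
def Kset (p p' : ℤ) : Finset (ℤ × ℤ) :=
  (Finset.Icc 1 (p - 1) ×ˢ Finset.Icc 1 (p' - 1)).filter
    (fun rs => rs.1 * p' + rs.2 * p ≤ p * p')

/-- BPZ modular S-matrix. -/
def SBPZ (p p' r s r' s' : ℤ) : ℂ :=
  (Real.sqrt (8 / ((p : ℝ) * p')) : ℂ) * (-1 : ℂ) ^ ((r + s) * (r' + s')) *
    (Real.sin (π * ((p : ℝ) - p') * r * r' / p) : ℂ) *
    (Real.sin (π * ((p : ℝ) - p') * s * s' / p') : ℂ)

/-- Typical-typical modular S-data. -/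
def Stt (p p' : ℤ) (ε ε' : ℕ) (r s : ℤ) (x : ℂ) (r' s' : ℤ) (x' : ℂ) : ℂ :=
  Complex.I ^ (-((ε : ℤ) * ε')) * SBPZ p p' r s r' s' *
    (Real.sqrt (2 * ((p' : ℝ) / p)) : ℂ) *
    Complex.exp (-4 * (π : ℂ) * Complex.I * ((p' : ℂ) / p) *
      (x - Complex.I * ε / 2) * (x' - Complex.I * ε' / 2))

lemma e2_def (x : ℂ) : e2 x = Complex.exp (2 * (π : ℂ) * Complex.I * x) := rfl

lemma e2_add (x y : ℂ) : e2 (x + y) = e2 x * e2 y := by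
  simp [e2, mul_add, Complex.exp_add]

lemma e2_int (m : ℤ) : e2 (m : ℂ) = 1 := by
  rw [e2_def, show 2*(π:ℂ)*Complex.I*(m:ℂ) = (m:ℂ)*(2*π*Complex.I) by ring]
  exact Complex.exp_int_mul_two_pi_mul_I m

lemma e2_half : e2 (1/2) = -1 := by
  rw [e2_def, show 2*(π:ℂ)*Complex.I*(1/2) = (π:ℂ)*Complex.I by ring]
  exact Complex.exp_pi_mul_I

lemma e2_add_int (x : ℂ) (m : ℤ) : e2 (x + m) = e2 x := by
  rw [e2_add, e2_int, mul_one]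

lemma e2_add_nat (x : ℂ) (n : ℕ) : e2 (x + n) = e2 x := by
  simpa using e2_add_int x n

lemma e2_add_nat_half (x : ℂ) (n : ℕ) : e2 (x + ((n:ℂ) + 1/2)) = - e2 x := by
  rw [show x + ((n:ℂ) + 1/2) = (x + 1/2) + (n:ℂ) by ring, e2_add_nat, e2_add, e2_half]
  ring

lemma e2_inv (x : ℂ) : (e2 x)⁻¹ = e2 (-x) := by
  rw [e2_def, e2_def, ← Complex.exp_neg]; ring_nf

lemma eta_T (τ : ℂ) : dedekindEta (τ + 1) = e2 (1/24) * dedekindEta τ := by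
  unfold dedekindEta
  have h : ∀ n : ℕ, (1 - e2 ((τ+1) * ((n:ℂ) + 1))) = (1 - e2 (τ * ((n:ℂ)+1))) := by
    intro n
    rw [show (τ+1)*((n:ℂ)+1) = (τ*((n:ℂ)+1) + 1) + (n:ℂ) by ring, e2_add_nat,
        show τ*((n:ℂ)+1) + 1 = τ*((n:ℂ)+1) + ((1:ℤ):ℂ) by norm_num, e2_add_int]
  rw [tprod_congr h, show (τ+1)/24 = τ/24 + (1/24 : ℂ) by ring, e2_add]
  ring

lemma theta_T1 (ε' : ℕ) (u τ : ℂ) : theta 1 ε' u (τ + 1) = e2 (1/8) * theta 1 ε' u τ := by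
  unfold theta
  have h : ∀ n : ℕ,
      ((1 - e2 ((τ+1) * ((n:ℂ) + 1))) *
        (1 + (-1 : ℂ) ^ ε' * e2 u * e2 ((τ+1) * (((n:ℂ) + 1) - (1 - ((1:ℕ) : ℂ)) / 2))) *
        (1 + (-1 : ℂ) ^ ε' * e2 (-u) * e2 ((τ+1) * (((n:ℂ) + 1) - (1 + ((1:ℕ) : ℂ)) / 2))))
      = ((1 - e2 (τ * ((n:ℂ) + 1))) *
        (1 + (-1 : ℂ) ^ ε' * e2 u * e2 (τ * (((n:ℂ) + 1) - (1 - ((1:ℕ) : ℂ)) / 2))) *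
        (1 + (-1 : ℂ) ^ ε' * e2 (-u) * e2 (τ * (((n:ℂ) + 1) - (1 + ((1:ℕ) : ℂ)) / 2)))) := by
    intro n
    push_cast
    rw [show (τ+1)*((n:ℂ)+1) = (τ*((n:ℂ)+1) + ((1:ℤ):ℂ)) + (n:ℂ) by push_cast; ring,
        e2_add_nat, e2_add_int]
    rw [show (τ+1)*(((n:ℂ)+1) - (1-(1:ℂ))/2) = (τ*(((n:ℂ)+1) - (1-(1:ℂ))/2) + ((1:ℤ):ℂ)) + (n:ℂ) by push_cast; ring,
        e2_add_nat, e2_add_int]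
    rw [show (τ+1)*(((n:ℂ)+1) - (1+(1:ℂ))/2) = τ*(((n:ℂ)+1) - (1+(1:ℂ))/2) + (n:ℂ) by ring,
        e2_add_nat]
  rw [tprod_congr h, show (τ+1)*((1:ℕ):ℂ)/8 = τ*((1:ℕ):ℂ)/8 + 1/8 by push_cast; ring, e2_add]
  ring

lemma theta_T00 (u τ : ℂ) : theta 0 0 u (τ + 1) = theta 0 1 u τ := by
  unfold theta
  have h : ∀ n : ℕ,
      ((1 - e2 ((τ+1) * ((n:ℂ) + 1))) *
        (1 + (-1 : ℂ) ^ (0:ℕ) * e2 u * e2 ((τ+1) * (((n:ℂ) + 1) - (1 - ((0:ℕ) : ℂ)) / 2))) *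
        (1 + (-1 : ℂ) ^ (0:ℕ) * e2 (-u) * e2 ((τ+1) * (((n:ℂ) + 1) - (1 + ((0:ℕ) : ℂ)) / 2))))
      = ((1 - e2 (τ * ((n:ℂ) + 1))) *
        (1 + (-1 : ℂ) ^ (1:ℕ) * e2 u * e2 (τ * (((n:ℂ) + 1) - (1 - ((0:ℕ) : ℂ)) / 2))) *
        (1 + (-1 : ℂ) ^ (1:ℕ) * e2 (-u) * e2 (τ * (((n:ℂ) + 1) - (1 + ((0:ℕ) : ℂ)) / 2)))) := by
    intro n
    push_cast
    rw [show (τ+1)*((n:ℂ)+1) = (τ*((n:ℂ)+1) + ((1:ℤ):ℂ)) + (n:ℂ) by push_cast; ring,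
        e2_add_nat, e2_add_int]
    rw [show (τ+1)*(((n:ℂ)+1) - (1-(0:ℂ))/2) = τ*(((n:ℂ)+1) - (1-(0:ℂ))/2) + ((n:ℂ) + 1/2) by ring,
        e2_add_nat_half]
    rw [show (τ+1)*(((n:ℂ)+1) - (1+(0:ℂ))/2) = τ*(((n:ℂ)+1) - (1+(0:ℂ))/2) + ((n:ℂ) + 1/2) by ring,
        e2_add_nat_half]
    ring
  rw [tprod_congr h]
  norm_num

lemma theta_T01 (u τ : ℂ) : theta 0 1 u (τ + 1) = theta 0 0 u τ := by
  unfold theta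
  have h : ∀ n : ℕ,
      ((1 - e2 ((τ+1) * ((n:ℂ) + 1))) *
        (1 + (-1 : ℂ) ^ (1:ℕ) * e2 u * e2 ((τ+1) * (((n:ℂ) + 1) - (1 - ((0:ℕ) : ℂ)) / 2))) *
        (1 + (-1 : ℂ) ^ (1:ℕ) * e2 (-u) * e2 ((τ+1) * (((n:ℂ) + 1) - (1 + ((0:ℕ) : ℂ)) / 2))))
      = ((1 - e2 (τ * ((n:ℂ) + 1))) *
        (1 + (-1 : ℂ) ^ (0:ℕ) * e2 u * e2 (τ * (((n:ℂ) + 1) - (1 - ((0:ℕ) : ℂ)) / 2))) *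
        (1 + (-1 : ℂ) ^ (0:ℕ) * e2 (-u) * e2 (τ * (((n:ℂ) + 1) - (1 + ((0:ℕ) : ℂ)) / 2)))) := by
    intro n
    push_cast
    rw [show (τ+1)*((n:ℂ)+1) = (τ*((n:ℂ)+1) + ((1:ℤ):ℂ)) + (n:ℂ) by push_cast; ring,
        e2_add_nat, e2_add_int]
    rw [show (τ+1)*(((n:ℂ)+1) - (1-(0:ℂ))/2) = τ*(((n:ℂ)+1) - (1-(0:ℂ))/2) + ((n:ℂ) + 1/2) by ring,
        e2_add_nat_half]
    rw [show (τ+1)*(((n:ℂ)+1) - (1+(0:ℂ))/2) = τ*(((n:ℂ)+1) - (1+(0:ℂ))/2) + ((n:ℂ) + 1/2) by ring,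
        e2_add_nat_half]
    ring
  rw [tprod_congr h]
  norm_num

lemma chi_T (p p' r s : ℤ) (hp : (p:ℂ) ≠ 0) (hp' : (p':ℂ) ≠ 0) (τ : ℂ) :
    chiBPZ p p' r s (τ + 1) =
      e2 (-(1/24)) * e2 (((r * p' - s * p : ℤ) : ℂ) ^ 2 / (4 * p * p')) * chiBPZ p p' r s τ := by
  unfold chiBPZ
  set c : ℂ := ((r * p' - s * p : ℤ) : ℂ) ^ 2 / (4 * (p:ℂ) * p') with hc
  have key : ∀ n : ℤ,
      (e2 ((τ+1) * ((p * p' : ℂ) * ((n : ℂ) + ((r * p' - s * p : ℤ) : ℂ) / (2 * p * p')) ^ 2)) -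
       e2 ((τ+1) * ((p * p' : ℂ) * ((n : ℂ) + ((-r * p' - s * p : ℤ) : ℂ) / (2 * p * p')) ^ 2)))
      = e2 c *
      (e2 (τ * ((p * p' : ℂ) * ((n : ℂ) + ((r * p' - s * p : ℤ) : ℂ) / (2 * p * p')) ^ 2)) -
       e2 (τ * ((p * p' : ℂ) * ((n : ℂ) + ((-r * p' - s * p : ℤ) : ℂ) / (2 * p * p')) ^ 2))) := by
    intro n
    have h1 : ((p * p' : ℂ) * ((n : ℂ) + ((r * p' - s * p : ℤ) : ℂ) / (2 * p * p')) ^ 2)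
        = c + ((p * p' * n^2 + n * (r * p' - s * p) : ℤ) : ℂ) := by
      rw [hc]; push_cast; field_simp; ring
    have h2 : ((p * p' : ℂ) * ((n : ℂ) + ((-r * p' - s * p : ℤ) : ℂ) / (2 * p * p')) ^ 2)
        = c + ((p * p' * n^2 - n * (r * p' + s * p) + r * s : ℤ) : ℂ) := by
      rw [hc]; push_cast; field_simp; ring
    rw [h1, h2,
        show (τ+1) * (c + ((p * p' * n^2 + n * (r * p' - s * p) : ℤ) : ℂ))
          = (τ * (c + ((p * p' * n^2 + n * (r * p' - s * p) : ℤ) : ℂ)) + c)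
            + ((p * p' * n^2 + n * (r * p' - s * p) : ℤ) : ℂ) by ring,
        show (τ+1) * (c + ((p * p' * n^2 - n * (r * p' + s * p) + r * s : ℤ) : ℂ))
          = (τ * (c + ((p * p' * n^2 - n * (r * p' + s * p) + r * s : ℤ) : ℂ)) + c)
            + ((p * p' * n^2 - n * (r * p' + s * p) + r * s : ℤ) : ℂ) by ring,
        e2_add_int, e2_add_int, e2_add, e2_add]
    ring
  rw [tsum_congr key, tsum_mul_left, eta_T, mul_inv, e2_inv]
  ring

/-- Modular T-transformation of the typical characters. -/
theorem typical_T_transformation (p p' : ℤ) (hp : 2 ≤ p) (hp' : 2 ≤ p')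
    (hco : IsCoprime p p') (r s : ℤ) (hK : (r, s) ∈ Kset p p') (x : ℂ)
    (ε ε' : ℕ) (hε : ε ≤ 1) (hε' : ε' ≤ 1)
    (τ : ℂ) (hτ : 0 < τ.im) (u t : ℂ) :
    Tchar p p' ε ε' r s x (τ + 1) u t =
      Complex.exp (2 * (π : ℂ) * Complex.I *
          (((p' : ℂ) / p) * (x - Complex.I * ε / 2) ^ 2 +
            ((r * p' - s * p : ℤ) : ℂ) ^ 2 / (4 * p * p') - (1 - (ε : ℂ)) / 8)) *
        Tchar p p' ε (ε * ε' + (1 - ε) * (1 - ε')) r s x τ u t := by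
  have hpc : (p:ℂ) ≠ 0 := by
    exact_mod_cast (by omega : p ≠ 0)
  have hpc' : (p':ℂ) ≠ 0 := by
    exact_mod_cast (by omega : p' ≠ 0)
  have h24 : (e2 (1/24) * dedekindEta τ)^2 = e2 (1/12) * (dedekindEta τ)^2 := by
    rw [mul_pow, sq (e2 (1/24)), ← e2_add]; norm_num
  interval_cases ε
  · interval_cases ε'
    · -- ε = 0, ε' = 0
      show Tchar p p' 0 0 r s x (τ + 1) u t = _ * Tchar p p' 0 1 r s x τ u t
      unfold Tchar
      rw [theta_T00, eta_T, chi_T p p' r s hpc hpc', h24,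
          show (τ+1) * (((p':ℂ)/p) * (x - Complex.I * ((0:ℕ):ℂ) / 2)^2)
            = τ * (((p':ℂ)/p) * (x - Complex.I * ((0:ℕ):ℂ) / 2)^2)
              + ((p':ℂ)/p) * (x - Complex.I * ((0:ℕ):ℂ) / 2)^2 by ring,
          e2_add, ← e2_def, div_mul_eq_div_div, div_eq_mul_inv _ (e2 (1/12)), e2_inv]
      have hS : e2 (((p':ℂ)/p) * (x - Complex.I * ((0:ℕ):ℂ) / 2)^2) * e2 (-(1/12)) * e2 (-(1/24)) *
          e2 (((r * p' - s * p : ℤ) : ℂ) ^ 2 / (4 * p * p'))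
          = e2 ((((p' : ℂ) / p) * (x - Complex.I * ((0:ℕ):ℂ) / 2) ^ 2 +
            ((r * p' - s * p : ℤ) : ℂ) ^ 2 / (4 * p * p') - (1 - ((0:ℕ) : ℂ)) / 8)) := by
        simp only [e2_def, ← Complex.exp_add]
        congr 1
        push_cast
        ring
      linear_combination (e2 (τ * (((p':ℂ)/p) * (x - Complex.I * ((0:ℕ):ℂ) / 2)^2)) *
        e2 (u * (2 * Complex.I * ((p' : ℂ) / p) * (x - Complex.I * ((0:ℕ):ℂ) / 2))) *
        e2 (t * (3 * (1 - 2 * ((p' : ℂ) / p)))) * theta 0 1 u τ * chiBPZ p p' r s τ /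
        (dedekindEta τ)^2) * hS
    · -- ε = 0, ε' = 1
      show Tchar p p' 0 1 r s x (τ + 1) u t = _ * Tchar p p' 0 0 r s x τ u t
      unfold Tchar
      rw [theta_T01, eta_T, chi_T p p' r s hpc hpc', h24,
          show (τ+1) * (((p':ℂ)/p) * (x - Complex.I * ((0:ℕ):ℂ) / 2)^2)
            = τ * (((p':ℂ)/p) * (x - Complex.I * ((0:ℕ):ℂ) / 2)^2)
              + ((p':ℂ)/p) * (x - Complex.I * ((0:ℕ):ℂ) / 2)^2 by ring,
          e2_add, ← e2_def, div_mul_eq_div_div, div_eq_mul_inv _ (e2 (1/12)), e2_inv]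
      have hS : e2 (((p':ℂ)/p) * (x - Complex.I * ((0:ℕ):ℂ) / 2)^2) * e2 (-(1/12)) * e2 (-(1/24)) *
          e2 (((r * p' - s * p : ℤ) : ℂ) ^ 2 / (4 * p * p'))
          = e2 ((((p' : ℂ) / p) * (x - Complex.I * ((0:ℕ):ℂ) / 2) ^ 2 +
            ((r * p' - s * p : ℤ) : ℂ) ^ 2 / (4 * p * p') - (1 - ((0:ℕ) : ℂ)) / 8)) := by
        simp only [e2_def, ← Complex.exp_add]
        congr 1
        push_cast
        ring
      linear_combination (e2 (τ * (((p':ℂ)/p) * (x - Complex.I * ((0:ℕ):ℂ) / 2)^2)) *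
        e2 (u * (2 * Complex.I * ((p' : ℂ) / p) * (x - Complex.I * ((0:ℕ):ℂ) / 2))) *
        e2 (t * (3 * (1 - 2 * ((p' : ℂ) / p)))) * theta 0 0 u τ * chiBPZ p p' r s τ /
        (dedekindEta τ)^2) * hS
  · -- ε = 1
    rw [show (1 * ε' + (1 - 1) * (1 - ε') : ℕ) = ε' from by omega]
    unfold Tchar
    rw [theta_T1, eta_T, chi_T p p' r s hpc hpc', h24,
        show (τ+1) * (((p':ℂ)/p) * (x - Complex.I * ((1:ℕ):ℂ) / 2)^2)
          = τ * (((p':ℂ)/p) * (x - Complex.I * ((1:ℕ):ℂ) / 2)^2)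
            + ((p':ℂ)/p) * (x - Complex.I * ((1:ℕ):ℂ) / 2)^2 by ring,
        e2_add, ← e2_def, div_mul_eq_div_div, div_eq_mul_inv _ (e2 (1/12)), e2_inv]
    have hS : e2 (((p':ℂ)/p) * (x - Complex.I * ((1:ℕ):ℂ) / 2)^2) * e2 (1/8) * e2 (-(1/12)) *
        e2 (-(1/24)) * e2 (((r * p' - s * p : ℤ) : ℂ) ^ 2 / (4 * p * p'))
        = e2 ((((p' : ℂ) / p) * (x - Complex.I * ((1:ℕ):ℂ) / 2) ^ 2 +
          ((r * p' - s * p : ℤ) : ℂ) ^ 2 / (4 * p * p') - (1 - ((1:ℕ) : ℂ)) / 8)) := by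
      simp only [e2_def, ← Complex.exp_add]
      congr 1
      push_cast
      ring
    linear_combination ((-1:ℂ) ^ (1 * ε' : ℕ) *
      e2 (τ * (((p':ℂ)/p) * (x - Complex.I * ((1:ℕ):ℂ) / 2)^2)) *
      e2 (u * (2 * Complex.I * ((p' : ℂ) / p) * (x - Complex.I * ((1:ℕ):ℂ) / 2))) *
      e2 (t * (3 * (1 - 2 * ((p' : ℂ) / p)))) * theta 1 ε' u τ * chiBPZ p p' r s τ /
      (dedekindEta τ)^2) * hS

end
end

section
/- Let (p,p') be a pair of coprime positive integers with p ≥ 2, and write p' = kp + ℓ with integers k ≥ 0 and 1 ≤ ℓ ≤ p−1. Then for each integer m with 0 ≤ m ≤ p−1 there exists a unique pair of integers (r_m, s_m) with 0 ≤ r_m ≤ p−1, 0 ≤ s_m ≤ ℓ−1 and m = ℓ r_m − p s_m, and the set of all integer triples (r,s;θ) with 1 ≤ r ≤ p−1, 0 ≤ s ≤ p'−1 and 2m+2p'−p = 2(r−2θ)p' − (2s+1)p equals { (2θ+1+r_m, k r_m + s_m; θ) : θ ∈ ℤ, −⌊r_m/2⌋ ≤ θ ≤ ⌊(p−r_m)/2⌋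 − 1 }. -/
/-- Parameterization of the discrete spectra 𝒮^{(m)}_{p,p'}: existence and uniqueness of
(r_m, s_m), and the explicit description of the solution set. -/
theorem discrete_spectra_parameterization (p p' k ℓ : ℤ) (hp : 2 ≤ p) (hp' : 1 ≤ p')
    (hco : IsCoprime p p') (hk : 0 ≤ k) (hℓ : 1 ≤ ℓ) (hℓp : ℓ ≤ p - 1)
    (hkl : p' = k * p + ℓ) (m : ℤ) (hm0 : 0 ≤ m) (hm1 : m ≤ p - 1) :
    (∃! rs : ℤ × ℤ, 0 ≤ rs.1 ∧ rs.1 ≤ p - 1 ∧ 0 ≤ rs.2 ∧ rs.2 ≤ ℓ - 1 ∧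
        m = ℓ * rs.1 - p * rs.2) ∧
    ∀ rm sm : ℤ, 0 ≤ rm → rm ≤ p - 1 → 0 ≤ sm → sm ≤ ℓ - 1 → m = ℓ * rm - p * sm →
      {x : ℤ × ℤ × ℤ | 1 ≤ x.1 ∧ x.1 ≤ p - 1 ∧ 0 ≤ x.2.1 ∧ x.2.1 ≤ p' - 1 ∧
          2 * m + 2 * p' - p = 2 * (x.1 - 2 * x.2.2) * p' - (2 * x.2.1 + 1) * p} =
        {x : ℤ × ℤ × ℤ | ∃ θ : ℤ, -(rm / 2) ≤ θ ∧ θ ≤ (p - rm) / 2 - 1 ∧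
          x = (2 * θ + 1 + rm, k * rm + sm, θ)} := by
  have hp0 : (0 : ℤ) < p := by omega
  have hp'0 : (0 : ℤ) < p' := by omega
  -- coprimality of p and ℓ
  have hcoℓ : IsCoprime p ℓ := by
    have h : ℓ = p' + p * (-k) := by linarith
    rw [h]
    exact hco.add_mul_left_right (-k)
  constructor
  · -- existence and uniqueness of (rm, sm)
    obtain ⟨u, v, huv⟩ := id hcoℓ
    set r : ℤ := (v * m) % p with hrdef0
    have hr0 : 0 ≤ r := Int.emod_nonneg _ (by omega)
    have hr1 : r < p := Int.emod_lt_of_pos _ hp0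
    have hrdef : r = v * m - p * ((v * m) / p) := by
      rw [hrdef0, Int.emod_def]
    have hdvd : p ∣ ℓ * r - m := ⟨-(m * u) - ℓ * ((v * m) / p), by
      linear_combination ℓ * hrdef + m * huv⟩
    set s : ℤ := (ℓ * r - m) / p with hsdef
    have hs : p * s = ℓ * r - m := Int.mul_ediv_cancel' hdvd
    have hlr0 : 0 ≤ ℓ * r := mul_nonneg (by omega) hr0
    have hlrub : ℓ * r ≤ ℓ * (p - 1) := mul_le_mul_of_nonneg_left (by omega) (by omega)
    have hs0 : 0 ≤ s := by nlinarith
    have hs1 : s ≤ ℓ - 1 := by nlinarith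
    refine ⟨(r, s), ⟨hr0, by omega, hs0, hs1, by linarith⟩, ?_⟩
    rintro ⟨a, b⟩ ⟨ha0, ha1, hb0, hb1, hab⟩
    -- uniqueness
    have hd : p ∣ (a - r) * ℓ :=
      ⟨b - s, by linear_combination -hab + hs⟩
    have hd2 : p ∣ a - r := IsCoprime.dvd_of_dvd_mul_right hcoℓ hd
    have har : a - r = 0 := Int.eq_zero_of_abs_lt_dvd hd2 (abs_lt.mpr ⟨by omega, by omega⟩)
    have hbs : b = s := by
      have h1 : ℓ * a - p * b = ℓ * r - p * s := by linarith
      have : a = r := by omega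
      rw [this] at h1
      have : p * b = p * s := by linarith
      exact mul_left_cancel₀ (by omega) this
    simp [har.symm, hbs]
    omega
  · -- the set equality
    intro rm sm hrm0 hrm1 hsm0 hsm1 hm
    ext ⟨r, s, θ⟩
    simp only [Set.mem_setOf_eq]
    constructor
    · rintro ⟨h1, h2, h3, h4, heq⟩
      -- derive (r - 2θ - 1) * p' = m + s * p
      have h2' : 2 * ((r - 2 * θ - 1) * p') = 2 * (m + s * p) := by linear_combination -heq
      have hR : (r - 2 * θ - 1) * p' = m + s * p :=
        mul_left_cancel₀ two_ne_zero h2'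
      have hRnn : 0 ≤ r - 2 * θ - 1 := by nlinarith
      have hsp : s * p ≤ (p' - 1) * p := mul_le_mul_of_nonneg_right (by omega) hp0.le
      have hRub : r - 2 * θ - 1 < p := by nlinarith
      have hdv : p ∣ ((r - 2 * θ - 1) - rm) * ℓ :=
        ⟨s - sm - (r - 2 * θ - 1) * k, by
          linear_combination hR - (r - 2 * θ - 1) * hkl + hm⟩
      have hdv2 : p ∣ (r - 2 * θ - 1) - rm := IsCoprime.dvd_of_dvd_mul_right hcoℓ hdv
      have hRrm : (r - 2 * θ - 1) - rm = 0 :=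
        Int.eq_zero_of_abs_lt_dvd hdv2 (abs_lt.mpr ⟨by omega, by omega⟩)
      have hseq : s = k * rm + sm := by
        have h0 : ((r - 2 * θ - 1) - rm) * ℓ = 0 := by rw [hRrm]; ring
        have h1 : p * (s - sm - (r - 2 * θ - 1) * k) = 0 := by
          linear_combination -hR + (r - 2 * θ - 1) * hkl - hm + h0
        have h2 : s - sm - (r - 2 * θ - 1) * k = 0 := by
          rcases mul_eq_zero.mp h1 with h | h
          · omega
          · exact h
        have h3 : r - 2 * θ - 1 = rm := by omega
        rw [h3] at h2
        linarith [h2, mul_comm rm k]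
      refine ⟨θ, by omega, by omega, ?_⟩
      have : r = 2 * θ + 1 + rm := by omega
      simp [this, hseq]
    · rintro ⟨t, ht0, ht1, hx⟩
      obtain ⟨hr, hs, hθ⟩ : r = 2 * t + 1 + rm ∧ s = k * rm + sm ∧ θ = t := by
        simpa [Prod.ext_iff] using hx
      subst hr hs hθ
      have hkr : 0 ≤ k * (p - 1 - rm) := mul_nonneg hk (by omega)
      refine ⟨by omega, by omega, add_nonneg (mul_nonneg hk hrm0) hsm0, by nlinarith, ?_⟩
      linear_combination 2 * hm - 2 * rm * hkl
end

section
/- Let (p,p') be a pair of coprime positive integers with p ≥ 2. Then the set of discrete spectra 𝒮_{p,p'} is finite of cardinality |𝒮_{p,p'}| = p(p−1)/2. -/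
namespace SpectraAux

def sF (p' u m : ℤ) : ℤ := (-(m * u)) % p'

def tF (p p' u m : ℤ) : ℤ := (m + sF p' u m * p) / p'

lemma sF_nonneg (p' u m : ℤ) (hp' : 0 < p') : 0 ≤ sF p' u m :=
  Int.emod_nonneg _ (by omega)

lemma sF_lt (p' u m : ℤ) (hp' : 0 < p') : sF p' u m < p' :=
  Int.emod_lt_of_pos _ hp'

lemma tF_mul (p p' u v m : ℤ) (huv : u * p + v * p' = 1) :
    tF p p' u m * p' = m + sF p' u m * p := by
  have h1 : ((-(m * u)) % p') % p' = (-(m * u)) % p' := Int.emod_emod_of_dvd _ dvd_rfl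
  have h2 : (m + sF p' u m * p) ≡ m + (-(m * u)) * p [ZMOD p'] :=
    (Int.ModEq.mul_right p h1).add_left m
  have h3 : m + (-(m * u)) * p = (m * v) * p' := by linear_combination (-m) * huv
  have h4 : (m + (-(m * u)) * p) ≡ 0 [ZMOD p'] := by
    rw [h3]; exact Int.modEq_zero_iff_dvd.mpr ⟨m * v, mul_comm _ _⟩
  have hdvd : p' ∣ (m + sF p' u m * p) := Int.modEq_zero_iff_dvd.mp (h2.trans h4)
  exact Int.ediv_mul_cancel hdvd

lemma st_unique (p p' u v : ℤ) (hp' : 0 < p') (huv : u * p + v * p' = 1)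
    (hco : IsCoprime p p') {m s' t' : ℤ} (hs0 : 0 ≤ s') (hs1 : s' < p')
    (h : t' * p' - s' * p = m) : s' = sF p' u m ∧ t' = tF p p' u m := by
  have htm := tF_mul p p' u v m huv
  have key : (t' - tF p p' u m) * p' = (s' - sF p' u m) * p := by linear_combination h - htm
  have hdvd : p' ∣ (s' - sF p' u m) * p := ⟨t' - tF p p' u m, by linear_combination -key⟩
  have hdvd2 : p' ∣ (s' - sF p' u m) := hco.symm.dvd_of_dvd_mul_right hdvd
  have hb1 := sF_nonneg p' u m hp'
  have hb2 := sF_lt p' u m hp'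
  have hzero : s' - sF p' u m = 0 := Int.eq_zero_of_abs_lt_dvd hdvd2 (abs_lt.mpr ⟨by omega, by omega⟩)
  have hs : s' = sF p' u m := by omega
  refine ⟨hs, ?_⟩
  have : (t' - tF p p' u m) * p' = 0 := by rw [key, hzero, zero_mul]
  rcases mul_eq_zero.mp this with h0 | h0
  · omega
  · omega

lemma card_filter_odd (n : ℤ) (hn : 0 ≤ n) :
    (((Finset.Icc 1 n).filter (fun r => r % 2 = 1)).card : ℤ) = (n + 1) / 2 := by
  have himg : (Finset.Icc 1 n).filter (fun r => r % 2 = 1)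
      = (Finset.Icc 0 ((n - 1) / 2)).image (fun j => 2 * j + 1) := by
    ext r
    simp only [Finset.mem_filter, Finset.mem_Icc, Finset.mem_image]
    constructor
    · rintro ⟨⟨h1, h2⟩, h3⟩
      exact ⟨r / 2, by omega, by omega⟩
    · rintro ⟨j, ⟨hj0, hj1⟩, rfl⟩
      omega
  rw [himg, Finset.card_image_of_injective _ (fun a b h => by omega), Int.card_Icc]
  omega

lemma card_filter_even (n : ℤ) (hn : 0 ≤ n) :
    (((Finset.Icc 1 n).filter (fun r => r % 2 = 0)).card : ℤ) = n / 2 := by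
  have himg : (Finset.Icc 1 n).filter (fun r => r % 2 = 0)
      = (Finset.Icc 1 (n / 2)).image (fun j => 2 * j) := by
    ext r
    simp only [Finset.mem_filter, Finset.mem_Icc, Finset.mem_image]
    constructor
    · rintro ⟨⟨h1, h2⟩, h3⟩
      exact ⟨r / 2, by omega, by omega⟩
    · rintro ⟨j, ⟨hj0, hj1⟩, rfl⟩
      omega
  rw [himg, Finset.card_image_of_injective _ (fun a b h => by omega), Int.card_Icc]
  omega

lemma card_filter_odd0 (n : ℤ) (hn : 0 ≤ n) :
    (((Finset.Icc 0 n).filter (fun r => r % 2 = 1)).card : ℤ) = (n + 1) / 2 := by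
  have himg : (Finset.Icc 0 n).filter (fun r => r % 2 = 1)
      = (Finset.Icc 1 n).filter (fun r => r % 2 = 1) := by
    ext r
    simp only [Finset.mem_filter, Finset.mem_Icc]
    omega
  rw [himg]; exact card_filter_odd n hn

lemma card_filter_even0 (n : ℤ) (hn : 0 ≤ n) :
    (((Finset.Icc 0 n).filter (fun r => r % 2 = 0)).card : ℤ) = n / 2 + 1 := by
  have himg : (Finset.Icc 0 n).filter (fun r => r % 2 = 0)
      = (Finset.Icc 0 (n / 2)).image (fun j => 2 * j) := by
    ext r
    simp only [Finset.mem_filter, Finset.mem_Icc, Finset.mem_image]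
    constructor
    · rintro ⟨⟨h1, h2⟩, h3⟩
      exact ⟨r / 2, by omega, by omega⟩
    · rintro ⟨j, ⟨hj0, hj1⟩, rfl⟩
      omega
  rw [himg, Finset.card_image_of_injective _ (fun a b h => by omega), Int.card_Icc]
  omega

lemma cnt_eq (n c : ℤ) (hn : 0 ≤ n) :
    (((Finset.Icc 1 n).filter (fun r => (r + c) % 2 = 1)).card : ℤ)
      = if c % 2 = 0 then (n + 1) / 2 else n / 2 := by
  rcases Int.emod_two_eq c with hc | hc
  · rw [if_pos hc]
    rw [show (Finset.Icc 1 n).filter (fun r => (r + c) % 2 = 1)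
        = (Finset.Icc 1 n).filter (fun r => r % 2 = 1) from
      Finset.filter_congr (fun r _ => by omega)]
    exact card_filter_odd n hn
  · rw [if_neg (by omega)]
    rw [show (Finset.Icc 1 n).filter (fun r => (r + c) % 2 = 1)
        = (Finset.Icc 1 n).filter (fun r => r % 2 = 0) from
      Finset.filter_congr (fun r _ => by omega)]
    exact card_filter_even n hn

end SpectraAux

open SpectraAux

/-- The set of discrete spectra 𝒮_{p,p'} (as a set of triples (r,s,θ)). -/
def SpectraSet (p p' : ℤ) : Set (ℤ × ℤ × ℤ) :=
  {x | 1 ≤ x.1 ∧ x.1 ≤ p - 1 ∧ 0 ≤ x.2.1 ∧ x.2.1 ≤ p' - 1 ∧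
    ∃ m : ℤ, 0 ≤ m ∧ m ≤ p - 1 ∧
      2 * m + 2 * p' - p = 2 * (x.1 - 2 * x.2.2) * p' - (2 * x.2.1 + 1) * p}

/-- The set of discrete spectra is finite of cardinality p(p-1)/2. -/
theorem spectra_card (p p' : ℤ) (hp : 2 ≤ p) (hp' : 1 ≤ p') (hco : IsCoprime p p') :
    (SpectraSet p p').Finite ∧ ((SpectraSet p p').ncard : ℤ) = p * (p - 1) / 2 := by
  obtain ⟨u, v, huv⟩ := id hco
  have hp'0 : 0 < p' := by omega
  set t : ℤ → ℤ := tF p p' u with ht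
  set s : ℤ → ℤ := sF p' u with hs
  have htmul : ∀ m : ℤ, t m * p' = m + s m * p := fun m => tF_mul p p' u v m huv
  have hsb : ∀ m : ℤ, 0 ≤ s m ∧ s m < p' := fun m => ⟨sF_nonneg p' u m hp'0, sF_lt p' u m hp'0⟩
  set T : Finset (ℤ × ℤ) :=
    (Finset.Icc 1 (p - 1) ×ˢ Finset.Icc 0 (p - 1)).filter
      (fun x => (x.1 + t x.2) % 2 = 1) with hT
  set F : ℤ × ℤ → ℤ × ℤ × ℤ := fun x => (x.1, s x.2, (x.1 - 1 - t x.2) / 2) with hF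
  -- Set equality
  have hset : SpectraSet p p' = ↑(T.image F) := by
    ext ⟨r, sv, θ⟩
    simp only [SpectraSet, Set.mem_setOf_eq, Finset.coe_image, Set.mem_image,
      Finset.mem_coe, hT, Finset.mem_filter, Finset.mem_product, Finset.mem_Icc]
    constructor
    · rintro ⟨h1, h2, h3, h4, m, hm0, hm1, heq⟩
      have hm : (r - 1 - 2 * θ) * p' - sv * p = m := by
        have h2m : 2 * ((r - 1 - 2 * θ) * p' - sv * p) = 2 * m := by linear_combination -heq
        have := mul_left_cancel₀ (a := (2 : ℤ)) two_ne_zero h2m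
        omega
      obtain ⟨hseq, hteq⟩ := st_unique p p' u v hp'0 huv hco h3 (by omega) hm
      refine ⟨(r, m), ⟨⟨⟨h1, h2⟩, hm0, hm1⟩, ?_⟩, ?_⟩
      · have htp : t m = r - 1 - 2 * θ := hteq.symm
        show (r + t m) % 2 = 1
        omega
      · have hth : t m = r - 1 - 2 * θ := hteq.symm
        simp only [hF]
        refine Prod.ext rfl (Prod.ext ?_ ?_) <;> simp
        · exact hseq.symm
        · omega
    · rintro ⟨⟨r', m⟩, ⟨⟨⟨hr1, hr2⟩, hm0, hm1⟩, hpar⟩, hfx⟩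
      simp only [hF, Prod.mk.injEq] at hfx
      obtain ⟨rfl, rfl, rfl⟩ := hfx
      simp only at hpar hr1 hr2 hm0 hm1
      have hsm := hsb m
      have h2θ : 2 * ((r' - 1 - t m) / 2) = r' - 1 - t m := by omega
      refine ⟨hr1, hr2, hsm.1, by omega, m, hm0, hm1, ?_⟩
      linear_combination (-2) * htmul m + 2 * p' * h2θ
  -- Injectivity of F on T
  have hinj : Set.InjOn F T := by
    rintro ⟨r1, m1⟩ h1 ⟨r2, m2⟩ h2 hf
    simp only [hT, Finset.coe_filter, Set.mem_setOf_eq, Finset.mem_product,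
      Finset.mem_Icc] at h1 h2
    simp only [hF, Prod.mk.injEq] at hf
    obtain ⟨hr, hsm, hθ⟩ := hf
    subst hr
    have htm : t m1 = t m2 := by omega
    have : m1 = m2 := by
      have e1 := htmul m1
      have e2 := htmul m2
      rw [htm, hsm] at e1
      omega
    simp [this]
  -- Main card computation
  have hfib : ∀ x ∈ T, x.2 ∈ Finset.Icc 0 (p - 1) := by
    intro x hx
    simp only [hT, Finset.mem_filter, Finset.mem_product] at hx
    exact hx.1.2
  have hfiber : ∀ m ∈ Finset.Icc 0 (p - 1),
      T.filter (fun x => x.2 = m)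
        = ((Finset.Icc 1 (p - 1)).filter (fun r => (r + t m) % 2 = 1)).image
            (fun r => (r, m)) := by
    intro m hm
    rw [Finset.mem_Icc] at hm
    ext ⟨a, b⟩
    simp only [hT, Finset.mem_filter, Finset.mem_product, Finset.mem_Icc, Finset.mem_image,
      Prod.mk.injEq]
    constructor
    · rintro ⟨⟨⟨ha, hb⟩, hpar⟩, rfl⟩
      exact ⟨a, ⟨ha, hpar⟩, rfl, rfl⟩
    · rintro ⟨j, ⟨hj, hjp⟩, rfl, rfl⟩
      exact ⟨⟨⟨hj, hm⟩, hjp⟩, rfl⟩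
  have hTcard : (T.card : ℤ) = p * (p - 1) / 2 := by
    rw [Finset.card_eq_sum_card_fiberwise hfib]
    push_cast
    rw [Finset.sum_congr rfl (fun m hm => by
      rw [hfiber m hm, Finset.card_image_of_injective _
        (fun a b h => by simpa using congrArg Prod.fst h)])]
    rw [Finset.sum_congr rfl (fun m _ => cnt_eq (p - 1) (t m) (by omega))]
    rcases Int.emod_two_eq p with hpe | hpo
    · -- p even
      have hp'odd : p' % 2 = 1 := by
        rcases Int.emod_two_eq p' with h | h
        · exfalso
          have h2p : (2 : ℤ) ∣ p := by omega
          have h2p' : (2 : ℤ) ∣ p' := by omega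
          have : (2 : ℤ) ∣ 1 := by
            rw [← huv]
            exact dvd_add (Dvd.dvd.mul_left h2p u) (Dvd.dvd.mul_left h2p' v)
          norm_num at this
        · exact h
      have hpar : ∀ m : ℤ, t m % 2 = m % 2 := by
        intro m
        have e1 : t m * p' % 2 = t m % 2 := by
          rw [Int.mul_emod, hp'odd, mul_one, Int.emod_emod_of_dvd _ dvd_rfl]
        have e2 : (m + s m * p) % 2 = m % 2 := by
          obtain ⟨k, hk⟩ : (2 : ℤ) ∣ p := by omega
          rw [hk, show m + s m * (2 * k) = m + (s m * k) * 2 by ring, Int.add_mul_emod_self_right]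
        rw [← e1, htmul m, e2]
      rw [Finset.sum_congr rfl (fun m _ => by rw [hpar m])]
      rw [Finset.sum_ite (fun _ => (p - 1 + 1) / 2) (fun _ => (p - 1) / 2)]
      rw [Finset.sum_const, Finset.sum_const,
        show (Finset.Icc (0:ℤ) (p-1)).filter (fun m => ¬ m % 2 = 0)
          = (Finset.Icc (0:ℤ) (p-1)).filter (fun m => m % 2 = 1) from
          Finset.filter_congr (fun r _ => by omega)]
      have c1 : (((Finset.Icc (0:ℤ) (p-1)).filter (fun m => m % 2 = 0)).card : ℤ) = p / 2 := by
        rw [card_filter_even0 (p - 1) (by omega)]; omega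
      have c2 : (((Finset.Icc (0:ℤ) (p-1)).filter (fun m => m % 2 = 1)).card : ℤ) = p / 2 := by
        rw [card_filter_odd0 (p - 1) (by omega)]; omega
      rw [nsmul_eq_mul, nsmul_eq_mul, c1, c2]
      obtain ⟨k, hk⟩ : (2 : ℤ) ∣ p := by omega
      have e1 : p / 2 = k := by omega
      have e2 : (p - 1 + 1) / 2 = k := by omega
      have e3 : (p - 1) / 2 = k - 1 := by omega
      have e4 : p * (p - 1) = 2 * (k * (2 * k - 1)) := by rw [hk]; ring
      rw [e1, e2, e3, e4, Int.mul_ediv_cancel_left _ two_ne_zero]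
      ring
    · -- p odd
      have hcollapse : ∀ m : ℤ,
          (if t m % 2 = 0 then (p - 1 + 1) / 2 else (p - 1) / 2) = (p - 1) / 2 := by
        intro m; split <;> omega
      rw [Finset.sum_congr rfl (fun m _ => hcollapse m), Finset.sum_const, Int.card_Icc,
        nsmul_eq_mul]
      have : ((p - 1 + 1 - 0).toNat : ℤ) = p := by omega
      rw [this, ← Int.mul_ediv_assoc p (by omega : (2:ℤ) ∣ p - 1)]
  constructor
  · rw [hset]; exact (T.image F).finite_toSet
  · rw [hset, Set.ncard_coe_finset, Finset.card_image_of_injOn hinj, hTcard]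
end

section
/- Let (p,p') be a pair of coprime positive integers with p ≥ 2, set a = p'/p, let 0 ≤ m, m' ≤ p−1, and suppose (r,s;θ) ∈ 𝒮^{(m)}_{p,p'} and (r',s';θ') ∈ 𝒮^{(m')}_{p,p'}. Then Σ_{(r'',s'';θ'')∈𝒮_{p,p'}} sin(πarr'') sin(πar'r'') e^{πia(r_m − r_{m'})(r''−2θ'')} = (p²/4) if (r,s,θ) = (r',s',θ'), and = 0 otherwise. -/
open Complex
open scoped Real

noncomputable section

section Helpers
open Finset

/-- `ee p C = exp (π i C / p)`. -/
def ee (p C : ℤ) : ℂ := Complex.exp ((π : ℂ) * Complex.I * C / p)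

variable {p : ℤ}

lemma ee_ne_zero (p C : ℤ) : ee p C ≠ 0 := Complex.exp_ne_zero _

lemma ee_add (p C D : ℤ) : ee p (C + D) = ee p C * ee p D := by
  rw [ee, ee, ee, ← Complex.exp_add]; congr 1; push_cast; ring

lemma ee_zero (p : ℤ) : ee p 0 = 1 := by simp [ee]

lemma ee_neg (p C : ℤ) : ee p (-C) = (ee p C)⁻¹ := by
  rw [ee, ee, ← Complex.exp_neg]; congr 1; push_cast; ring

lemma ee_pow (p C : ℤ) (n : ℕ) : ee p C ^ n = ee p (n * C) := by
  rw [ee, ee, ← Complex.exp_nat_mul]; congr 1; push_cast; ring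

lemma ee_eq_one_iff (hp : 2 ≤ p) {C : ℤ} : ee p C = 1 ↔ (2 * p) ∣ C := by
  have hp0 : (p : ℂ) ≠ 0 := by
    exact_mod_cast (by omega : p ≠ 0)
  have hπ : (π : ℂ) * Complex.I ≠ 0 := by
    simp [Real.pi_ne_zero, Complex.I_ne_zero]
  rw [ee, Complex.exp_eq_one_iff]
  constructor
  · rintro ⟨n, hn⟩
    refine ⟨n, ?_⟩
    have h2 : (π : ℂ) * Complex.I * C = (π : ℂ) * Complex.I * (2 * p * n) := by
      field_simp at hn
      linear_combination (↑π * Complex.I) * hn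
    have := mul_left_cancel₀ hπ h2
    exact_mod_cast this
  · rintro ⟨n, rfl⟩
    refine ⟨n, ?_⟩
    field_simp
    push_cast
    ring

lemma ee_p_mul_even (hp : 2 ≤ p) {t : ℤ} (ht : 2 ∣ t) : ee p (p * t) = 1 := by
  rw [ee_eq_one_iff hp]
  obtain ⟨u, rfl⟩ := ht
  exact ⟨u, by ring⟩

lemma ee_self (hp : 2 ≤ p) : ee p p = -1 := by
  have hp0 : (p : ℂ) ≠ 0 := by exact_mod_cast (by omega : p ≠ 0)
  rw [ee]
  rw [show (π : ℂ) * Complex.I * p / p = π * Complex.I by field_simp]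
  exact Complex.exp_pi_mul_I

lemma ee_p_mul_odd (hp : 2 ≤ p) {t : ℤ} (ht : ¬ 2 ∣ t) : ee p (p * t) = -1 := by
  obtain ⟨u, rfl⟩ : ∃ u, t = 2 * u + 1 := ⟨t / 2, by omega⟩
  rw [show p * (2 * u + 1) = p * (2 * u) + p by ring, ee_add,
    ee_p_mul_even hp ⟨u, rfl⟩, ee_self hp, one_mul]

/-- sum over `Icc 1 n` as a geometric-style sum over `range n.toNat`. -/
lemma sum_Icc_one_eq (n : ℤ) (g : ℤ → ℂ) :
    ∑ x ∈ Icc (1 : ℤ) n, g x = ∑ j ∈ range n.toNat, g ((j : ℤ) + 1) := by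
  refine Finset.sum_bij' (fun x _ => (x - 1).toNat) (fun j _ => (j : ℤ) + 1) ?_ ?_ ?_ ?_ ?_
  · intro a ha; simp only [mem_Icc] at ha; simp only [mem_range]; omega
  · intro a ha; simp only [mem_range] at ha; simp only [mem_Icc]; omega
  · intro a ha; simp only [mem_Icc] at ha; beta_reduce; omega
  · intro a ha; simp only [mem_range] at ha; beta_reduce; omega
  · intro a ha; simp only [mem_Icc] at ha; beta_reduce; congr 1; omega

lemma sum_Icc_ee (hp : 2 ≤ p) (n C : ℤ) :
    ∑ x ∈ Icc (1 : ℤ) n, ee p (C * x) = ee p C * ∑ j ∈ range n.toNat, (ee p C) ^ j := by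
  rw [sum_Icc_one_eq, Finset.mul_sum]
  refine Finset.sum_congr rfl fun j _ => ?_
  rw [ee_pow, ← ee_add]
  congr 1; ring


def FF (p C : ℤ) : ℂ := ∑ x ∈ Icc (1 : ℤ) (p - 1), ee p (C * x)
def GG (p C : ℤ) : ℂ := ∑ x ∈ Icc (1 : ℤ) p, ee p (C * x)

variable {p C : ℤ}

lemma GG_dvd (hp : 2 ≤ p) (h : 2 * p ∣ C) : GG p C = p := by
  rw [GG]
  rw [Finset.sum_congr rfl (fun x _ => (ee_eq_one_iff hp).2 (h.mul_right x))]
  rw [Finset.sum_const, Int.card_Icc]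
  have : (p + 1 - 1).toNat = p.toNat := by omega
  rw [this]
  simp only [nsmul_eq_mul, mul_one]
  exact_mod_cast congrArg (Int.cast : ℤ → ℂ) (Int.toNat_of_nonneg (by omega))

lemma GG_even (hp : 2 ≤ p) (he : 2 ∣ C) (hnd : ¬ 2 * p ∣ C) : GG p C = 0 := by
  rw [GG, sum_Icc_ee hp]
  have hq1 : ee p C ≠ 1 := fun h => hnd ((ee_eq_one_iff hp).1 h)
  rw [geom_sum_eq hq1]
  rw [ee_pow, Int.toNat_of_nonneg (by omega : (0:ℤ) ≤ p), ee_p_mul_even hp he]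
  simp

lemma FF_dvd (hp : 2 ≤ p) (h : 2 * p ∣ C) : FF p C = (p : ℂ) - 1 := by
  rw [FF]
  rw [Finset.sum_congr rfl (fun x _ => (ee_eq_one_iff hp).2 (h.mul_right x))]
  rw [Finset.sum_const, Int.card_Icc]
  have h2 : ((p - 1 + 1 - 1).toNat : ℤ) = p - 1 := by omega
  simp only [nsmul_eq_mul, mul_one]
  exact_mod_cast congrArg (Int.cast : ℤ → ℂ) h2

lemma FF_even (hp : 2 ≤ p) (he : 2 ∣ C) (hnd : ¬ 2 * p ∣ C) : FF p C = -1 := by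
  rw [FF, sum_Icc_ee hp]
  have hq1 : ee p C ≠ 1 := fun h => hnd ((ee_eq_one_iff hp).1 h)
  have hq0 : ee p C ≠ 0 := ee_ne_zero p C
  rw [geom_sum_eq hq1]
  rw [ee_pow, Int.toNat_of_nonneg (by omega : (0:ℤ) ≤ p - 1)]
  have : ee p ((p - 1) * C) = (ee p C)⁻¹ := by
    rw [show (p - 1) * C = p * C + -C by ring, ee_add, ee_p_mul_even hp he, ee_neg, one_mul]
  rw [this]
  have hq1' : ee p C - 1 ≠ 0 := sub_ne_zero.2 hq1
  field_simp
  ring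

lemma FF_neg_odd (hp : 2 ≤ p) (ho : ¬ 2 ∣ C) : FF p (-C) = - FF p C := by
  have key : ∀ x : ℤ, ee p (-C * (p - x)) = - ee p (C * x) := by
    intro x
    rw [show -C * (p - x) = p * (-C) + C * x by ring, ee_add,
      ee_p_mul_odd hp (by omega : ¬ (2:ℤ) ∣ -C)]
    ring
  have : FF p (-C) = ∑ x ∈ Icc (1 : ℤ) (p - 1), ee p (-C * (p - x)) := by
    rw [FF]
    refine Finset.sum_bij' (fun x _ => p - x) (fun x _ => p - x) ?_ ?_ ?_ ?_ ?_
    · intro a ha; simp only [mem_Icc] at ha ⊢; omega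
    · intro a ha; simp only [mem_Icc] at ha ⊢; omega
    · intro a ha; beta_reduce; omega
    · intro a ha; beta_reduce; omega
    · intro a ha; beta_reduce; congr 1; ring
  rw [this, Finset.sum_congr rfl (fun x _ => key x), Finset.sum_neg_distrib, FF]

lemma FF_add_two_p (hp : 2 ≤ p) : FF p (C + 2 * p) = FF p C := by
  rw [FF, FF]
  refine Finset.sum_congr rfl fun x _ => ?_
  rw [show (C + 2 * p) * x = C * x + p * (2 * x) by ring, ee_add,
    ee_p_mul_even hp ⟨x, rfl⟩, mul_one]


lemma sin_to_ee (p p' u x : ℤ) :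
    ((Real.sin (π * ((p' : ℝ) / p) * u * x) : ℝ) : ℂ) =
      (ee p (-(p' * u * x)) - ee p (p' * u * x)) * Complex.I / 2 := by
  have h1 : Complex.exp (-((π * ((p' : ℝ) / p) * u * x : ℝ) : ℂ) * Complex.I) =
      ee p (-(p' * u * x)) := by
    rw [ee]; congr 1; push_cast; ring
  have h2 : Complex.exp (((π * ((p' : ℝ) / p) * u * x : ℝ) : ℂ) * Complex.I) =
      ee p (p' * u * x) := by
    rw [ee]; congr 1; push_cast; ring
  rw [Complex.ofReal_sin, Complex.sin, h1, h2]

lemma Ksum (p p' : ℤ) (r r' : ℤ) :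
    ∑ x ∈ Icc (1 : ℤ) (p - 1),
        ((Real.sin (π * ((p' : ℝ) / p) * r * x) : ℝ) : ℂ) *
          ((Real.sin (π * ((p' : ℝ) / p) * r' * x) : ℝ) : ℂ) =
      -(1/4) * (FF p (p' * (r + r')) + FF p (-(p' * (r + r'))) -
        FF p (p' * (r - r')) - FF p (-(p' * (r - r')))) := by
  have key : ∀ x : ℤ,
      ((Real.sin (π * ((p' : ℝ) / p) * r * x) : ℝ) : ℂ) *
        ((Real.sin (π * ((p' : ℝ) / p) * r' * x) : ℝ) : ℂ) =
      -(1/4) * (ee p (p' * (r + r') * x) + ee p (-(p' * (r + r')) * x) -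
        ee p (p' * (r - r') * x) - ee p (-(p' * (r - r')) * x)) := by
    intro x
    rw [sin_to_ee, sin_to_ee]
    have h1 : ee p (p' * (r + r') * x) = ee p (p' * r * x) * ee p (p' * r' * x) := by
      rw [← ee_add]; congr 1; ring
    have h2 : ee p (-(p' * (r + r')) * x) = ee p (-(p' * r * x)) * ee p (-(p' * r' * x)) := by
      rw [← ee_add]; congr 1; ring
    have h3 : ee p (p' * (r - r') * x) = ee p (p' * r * x) * ee p (-(p' * r' * x)) := by
      rw [← ee_add]; congr 1; ring
    have h4 : ee p (-(p' * (r - r')) * x) = ee p (-(p' * r * x)) * ee p (p' * r' * x) := by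
      rw [← ee_add]; congr 1; ring
    rw [h1, h2, h3, h4]
    linear_combination ((ee p (-(p' * r * x)) - ee p (p' * r * x)) *
      (ee p (-(p' * r' * x)) - ee p (p' * r' * x)) / 4) * Complex.I_sq
  rw [Finset.sum_congr rfl fun x _ => key x]
  rw [FF, FF, FF, FF]
  rw [← Finset.sum_add_distrib, ← Finset.sum_sub_distrib, ← Finset.sum_sub_distrib,
    Finset.mul_sum]

lemma Ktsum (p p' : ℤ) (hp : 2 ≤ p) (r r' : ℤ) :
    ∑ x ∈ Icc (1 : ℤ) (p - 1),
        ee p (p * x) * (((Real.sin (π * ((p' : ℝ) / p) * r * x) : ℝ) : ℂ) *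
          ((Real.sin (π * ((p' : ℝ) / p) * r' * x) : ℝ) : ℂ)) =
      -(1/4) * (FF p (p' * (r + r') + p) + FF p (-(p' * (r + r') + p)) -
        FF p (p' * (r - r') + p) - FF p (-(p' * (r - r') + p))) := by
  have key : ∀ x : ℤ,
      ee p (p * x) * (((Real.sin (π * ((p' : ℝ) / p) * r * x) : ℝ) : ℂ) *
        ((Real.sin (π * ((p' : ℝ) / p) * r' * x) : ℝ) : ℂ)) =
      -(1/4) * (ee p ((p' * (r + r') + p) * x) + ee p ((-(p' * (r + r') + p) + 2 * p) * x) -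
        ee p ((p' * (r - r') + p) * x) - ee p ((-(p' * (r - r') + p) + 2 * p) * x)) := by
    intro x
    rw [sin_to_ee, sin_to_ee]
    have h1 : ee p ((p' * (r + r') + p) * x) = ee p (p * x) * (ee p (p' * r * x) * ee p (p' * r' * x)) := by
      rw [← ee_add, ← ee_add]; congr 1; ring
    have h2 : ee p ((-(p' * (r + r') + p) + 2 * p) * x) =
        ee p (p * x) * (ee p (-(p' * r * x)) * ee p (-(p' * r' * x))) := by
      rw [← ee_add, ← ee_add]; congr 1; ring
    have h3 : ee p ((p' * (r - r') + p) * x) = ee p (p * x) * (ee p (p' * r * x) * ee p (-(p' * r' * x))) := by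
      rw [← ee_add, ← ee_add]; congr 1; ring
    have h4 : ee p ((-(p' * (r - r') + p) + 2 * p) * x) =
        ee p (p * x) * (ee p (-(p' * r * x)) * ee p (p' * r' * x)) := by
      rw [← ee_add, ← ee_add]; congr 1; ring
    rw [h1, h2, h3, h4]
    linear_combination (ee p (p * x) * (ee p (-(p' * r * x)) - ee p (p' * r * x)) *
      (ee p (-(p' * r' * x)) - ee p (p' * r' * x)) / 4) * Complex.I_sq
  rw [Finset.sum_congr rfl fun x _ => key x]
  have e2 : FF p (-(p' * (r + r') + p) + 2 * p) = FF p (-(p' * (r + r') + p)) := FF_add_two_p hp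
  have e4 : FF p (-(p' * (r - r') + p) + 2 * p) = FF p (-(p' * (r - r') + p)) := FF_add_two_p hp
  rw [← e2, ← e4, FF, FF, FF, FF]
  rw [← Finset.sum_add_distrib, ← Finset.sum_sub_distrib, ← Finset.sum_sub_distrib,
    Finset.mul_sum]

lemma filter_parity_sum (p : ℤ) (hp : 2 ≤ p) (s t : Finset ℤ) (u v : ℤ → ℂ) :
    ∑ y ∈ (s ×ˢ t).filter (fun y => 2 ∣ (y.1 + y.2)), u y.1 * v y.2 =
      (1/2) * ((∑ a ∈ s, u a) * (∑ b ∈ t, v b)) +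
      (1/2) * ((∑ a ∈ s, ee p (p * a) * u a) * (∑ b ∈ t, ee p (p * b) * v b)) := by
  rw [Finset.sum_filter, Finset.sum_product]
  rw [Finset.sum_mul_sum, Finset.sum_mul_sum, Finset.mul_sum, Finset.mul_sum,
    ← Finset.sum_add_distrib]
  refine Finset.sum_congr rfl fun a _ => ?_
  rw [Finset.mul_sum, Finset.mul_sum, ← Finset.sum_add_distrib]
  refine Finset.sum_congr rfl fun b _ => ?_
  by_cases h : (2 : ℤ) ∣ (a + b)
  · simp only [h, if_true]
    have : ee p (p * a) * ee p (p * b) = 1 := by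
      rw [← ee_add]
      rw [show p * a + p * b = p * (a + b) by ring]
      exact ee_p_mul_even hp h
    linear_combination (-(u a * v b)/2) * this
  · simp only [h, if_false]
    have : ee p (p * a) * ee p (p * b) = -1 := by
      rw [← ee_add]
      rw [show p * a + p * b = p * (a + b) by ring]
      exact ee_p_mul_odd hp h
    linear_combination (-(u a * v b)/2) * this

lemma eq_of_dvd_of_lt_two_mul {p n : ℤ} (hp0 : 0 < p) (hdv : p ∣ n) (h1 : 0 < n)
    (h2 : n < 2 * p) : n = p := by
  obtain ⟨c, rfl⟩ := hdv
  have hc1 : 0 < c := by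
    have : p * 0 < p * c := by simpa using h1
    exact lt_of_mul_lt_mul_left this (by omega)
  have hc2 : c < 2 := by
    have : p * c < p * 2 := by linarith
    exact lt_of_mul_lt_mul_left this (by omega)
  have : c = 1 := by omega
  subst this; ring

lemma not_both_even {p p' : ℤ} (hco : IsCoprime p p') (h2 : 2 ∣ p) (h2' : 2 ∣ p') :
    False := by
  obtain ⟨u, v, huv⟩ := hco
  obtain ⟨a, rfl⟩ := h2
  obtain ⟨b, rfl⟩ := h2'
  have : (2 : ℤ) ∣ 1 := ⟨u * a + v * b, by linear_combination -huv⟩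
  norm_num at this

lemma two_dvd_of_two_p_dvd {p p' : ℤ} (hp : 2 ≤ p) (h : 2 * p ∣ p' * p) : 2 ∣ p' := by
  obtain ⟨d, hd⟩ := h
  have hp0 : (p : ℤ) ≠ 0 := by omega
  have : p' = 2 * d := mul_left_cancel₀ hp0 (by linear_combination hd)
  exact ⟨d, this⟩

section main
variable {p p' r r' Δ : ℤ} (hp : 2 ≤ p) (hp' : 1 ≤ p') (hco : IsCoprime p p')
  (hr : 1 ≤ r ∧ r ≤ p - 1) (hr' : 1 ≤ r' ∧ r' ≤ p - 1)
  (hΔb : -(p-1) ≤ Δ ∧ Δ ≤ p - 1) (hpar : 2 ∣ (r - r' - Δ))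

include hp hp' hco hr hr' hΔb hpar

lemma delta_zero_of_dvd (h : p ∣ p' * Δ) : Δ = 0 := by
  have h2 : p ∣ Δ := hco.dvd_of_dvd_mul_left h
  exact Int.eq_zero_of_abs_lt_dvd h2 (abs_lt.mpr ⟨by omega, by omega⟩)

lemma term2_eval :
    (-(1/4 : ℂ) * (FF p (p' * (r + r') + p) + FF p (-(p' * (r + r') + p)) -
        FF p (p' * (r - r') + p) - FF p (-(p' * (r - r') + p)))) * GG p (p' * Δ + p) = 0 := by
  by_cases hD : (2 : ℤ) ∣ (p' * Δ + p)
  · -- GG vanishes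
    have hnd : ¬ (2 * p ∣ (p' * Δ + p)) := by
      intro ⟨c, hc⟩
      have hpd : p ∣ p' * Δ := ⟨2 * c - 1, by linear_combination hc⟩
      have hΔ0 : Δ = 0 := delta_zero_of_dvd hp hp' hco hr hr' hΔb hpar hpd
      rw [hΔ0] at hc
      have : (2 * p) ∣ p := ⟨c, by linear_combination hc⟩
      have := Int.le_of_dvd (by omega) this
      omega
    rw [GG_even hp hD hnd, mul_zero]
  · -- FF's cancel in pairs
    have hparA : 2 ∣ ((p' * (r + r') + p) - (p' * Δ + p)) := by
      obtain ⟨c, hc⟩ : (2:ℤ) ∣ (r + r' - Δ) := by omega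
      exact ⟨p' * c, by linear_combination p' * hc⟩
    have hparB : 2 ∣ ((p' * (r - r') + p) - (p' * Δ + p)) := by
      obtain ⟨c, hc⟩ : (2:ℤ) ∣ (r - r' - Δ) := hpar
      exact ⟨p' * c, by linear_combination p' * hc⟩
    have hoA : ¬ (2:ℤ) ∣ (p' * (r + r') + p) := by
      obtain ⟨c, hc⟩ := hparA
      intro ⟨d, hd⟩
      exact hD ⟨d - c, by linear_combination hd - hc⟩
    have hoB : ¬ (2:ℤ) ∣ (p' * (r - r') + p) := by
      obtain ⟨c, hc⟩ := hparB
      intro ⟨d, hd⟩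
      exact hD ⟨d - c, by linear_combination hd - hc⟩
    rw [FF_neg_odd hp hoA, FF_neg_odd hp hoB]
    ring

lemma term1_eval :
    (-(1/4 : ℂ) * (FF p (p' * (r + r')) + FF p (-(p' * (r + r'))) -
        FF p (p' * (r - r')) - FF p (-(p' * (r - r'))))) * GG p (p' * Δ) =
      if (Δ = 0 ∧ r = r') then (p : ℂ)^2 / 2 else 0 := by
  have hAeval : (2:ℤ) ∣ (r + r') → ¬ (2 * p) ∣ (p' * (r + r')) := by
    intro heven hdvd
    have hpd : p ∣ p' * (r + r') := (dvd_mul_left p 2).trans hdvd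
    have h2 : p ∣ (r + r') := hco.dvd_of_dvd_mul_left hpd
    have hsum : r + r' = p := eq_of_dvd_of_lt_two_mul (by omega) h2 (by omega) (by omega)
    rw [hsum] at hdvd heven
    exact not_both_even hco heven (two_dvd_of_two_p_dvd hp (by obtain ⟨d, hd⟩ := hdvd; exact ⟨d, by linear_combination hd⟩))
  by_cases hΔ0 : Δ = 0
  · subst hΔ0
    have hrr2 : (2:ℤ) ∣ (r - r') := by omega
    have hGG : GG p (p' * 0) = p := by
      rw [mul_zero]; exact GG_dvd hp (dvd_zero _)
    rw [hGG]
    by_cases hrr : r = r'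
    · subst hrr
      simp only [and_self, if_true, eq_self_iff_true]
      have hB : FF p (p' * (r - r)) = (p:ℂ) - 1 := by
        rw [show r - r = 0 by ring, mul_zero]; exact FF_dvd hp (dvd_zero _)
      have hB' : FF p (-(p' * (r - r))) = (p:ℂ) - 1 := by
        rw [show r - r = 0 by ring, mul_zero, neg_zero]; exact FF_dvd hp (dvd_zero _)
      have heA : (2:ℤ) ∣ (r + r) := ⟨r, by ring⟩
      have hA : FF p (p' * (r + r)) = -1 :=
        FF_even hp ⟨p' * r, by ring⟩ (hAeval heA)
      have hA' : FF p (-(p' * (r + r))) = -1 := by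
        refine FF_even hp ⟨-(p' * r), by ring⟩ (fun ⟨c, hc⟩ => hAeval heA ⟨-c, by linear_combination -hc⟩)
      rw [hA, hA', hB, hB']
      ring
    · simp only [hrr, and_false, if_false]
      have hndB : ¬ (2 * p) ∣ (p' * (r - r')) := by
        intro hdvd
        have hpd : p ∣ p' * (r - r') := (dvd_mul_left p 2).trans hdvd
        have h2 : p ∣ (r - r') := hco.dvd_of_dvd_mul_left hpd
        have : r - r' = 0 := Int.eq_zero_of_abs_lt_dvd h2 (abs_lt.mpr ⟨by omega, by omega⟩)
        omega
      have heA : (2:ℤ) ∣ (r + r') := by omega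
      obtain ⟨c, hc⟩ := hrr2
      have hB : FF p (p' * (r - r')) = -1 := FF_even hp ⟨p' * c, by linear_combination p' * hc⟩ hndB
      have hB' : FF p (-(p' * (r - r'))) = -1 :=
        FF_even hp ⟨-(p' * c), by linear_combination -p' * hc⟩
          (fun ⟨d, hd⟩ => hndB ⟨-d, by linear_combination -hd⟩)
      obtain ⟨c2, hc2⟩ := heA
      have hA : FF p (p' * (r + r')) = -1 :=
        FF_even hp ⟨p' * c2, by linear_combination p' * hc2⟩ (hAeval ⟨c2, hc2⟩)
      have hA' : FF p (-(p' * (r + r'))) = -1 :=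
        FF_even hp ⟨-(p' * c2), by linear_combination -p' * hc2⟩
          (fun ⟨d, hd⟩ => hAeval ⟨c2, hc2⟩ ⟨-d, by linear_combination -hd⟩)
      rw [hA, hA', hB, hB']
      ring
  · simp only [hΔ0, false_and, if_false]
    by_cases h2Δ : (2:ℤ) ∣ p' * Δ
    · have hnd : ¬ (2 * p) ∣ (p' * Δ) := by
        intro hdvd
        exact hΔ0 (delta_zero_of_dvd hp hp' hco hr hr' hΔb hpar ((dvd_mul_left p 2).trans hdvd))
      rw [GG_even hp h2Δ hnd, mul_zero]
    · have hparA : 2 ∣ ((p' * (r + r')) - (p' * Δ)) := by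
        obtain ⟨c, hc⟩ : (2:ℤ) ∣ (r + r' - Δ) := by omega
        exact ⟨p' * c, by linear_combination p' * hc⟩
      have hparB : 2 ∣ ((p' * (r - r')) - (p' * Δ)) := by
        obtain ⟨c, hc⟩ := hpar
        exact ⟨p' * c, by linear_combination p' * hc⟩
      have hoA : ¬ (2:ℤ) ∣ (p' * (r + r')) := by
        obtain ⟨c, hc⟩ := hparA
        intro ⟨d, hd⟩
        exact h2Δ ⟨d - c, by linear_combination hd - hc⟩
      have hoB : ¬ (2:ℤ) ∣ (p' * (r - r')) := by
        obtain ⟨c, hc⟩ := hparB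
        intro ⟨d, hd⟩
        exact h2Δ ⟨d - c, by linear_combination hd - hc⟩
      rw [FF_neg_odd hp hoA, FF_neg_odd hp hoB]
      ring

end main

/-- bounds on `X` from `X * p' = m + p' + s * p`. -/
lemma X_bounds {p p' X s m : ℤ} (hp : 2 ≤ p) (hp' : 1 ≤ p')
    (h : X * p' = m + p' + s * p) (hm0 : 0 ≤ m) (hm1 : m ≤ p - 1)
    (hs0 : 0 ≤ s) (hs1 : s ≤ p' - 1) : 1 ≤ X ∧ X ≤ p := by
  have hsp : 0 ≤ s * p := mul_nonneg hs0 (by omega)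
  constructor
  · by_contra hX
    push_neg at hX
    have : X * p' ≤ 0 := mul_nonpos_of_nonpos_of_nonneg (by omega) (by omega)
    omega
  · have h1 : s * p ≤ (p' - 1) * p := mul_le_mul_of_nonneg_right (by omega) (by omega)
    have h2 : X * p' < (p + 1) * p' := by
      have e1 : (p + 1) * p' = p * p' + p' := by ring
      have e2 : (p' - 1) * p = p * p' - p := by ring
      linarith
    have := lt_of_mul_lt_mul_right h2 (by omega : (0:ℤ) ≤ p')
    omega

/-- from the data of `m = ℓ r_m - p s_m` we get `r_m = X - 1`. -/
lemma rm_eq {p p' k ℓ m X s rm sm : ℤ} (hp : 2 ≤ p) (hco : IsCoprime p p')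
    (hkl : p' = k * p + ℓ)
    (hXeq : X * p' = m + p' + s * p) (hX1 : 1 ≤ X) (hX2 : X ≤ p)
    (hmeq : m = ℓ * rm - p * sm) (hrm0 : 0 ≤ rm) (hrm1 : rm ≤ p - 1) :
    rm = X - 1 := by
  have hcopl : IsCoprime p ℓ := by
    have h1 : IsCoprime p (p' + p * (-k)) := hco.add_mul_left_right (-k)
    have h2 : p' + p * (-k) = ℓ := by linear_combination hkl
    rwa [h2] at h1
  have hdv : p ∣ ℓ * (rm - (X - 1)) :=
    ⟨sm - s + (X - 1) * k, by linear_combination -hmeq - hXeq + (X - 1) * hkl⟩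
  have hdv2 : p ∣ (rm - (X - 1)) := hcopl.dvd_of_dvd_mul_left hdv
  have := Int.eq_zero_of_abs_lt_dvd hdv2 (abs_lt.mpr ⟨by omega, by omega⟩)
  omega

end Helpers

open Finset

/-- Unitarity lemma for the discrete spectra. -/
theorem spectra_sum_orthogonality (p p' k ℓ : ℤ) (hp : 2 ≤ p) (hp' : 1 ≤ p')
    (hco : IsCoprime p p') (hk : 0 ≤ k) (hℓ1 : 1 ≤ ℓ) (hℓ2 : ℓ ≤ p - 1)
    (hkl : p' = k * p + ℓ)
    (m m' : ℤ) (hm : 0 ≤ m ∧ m ≤ p - 1) (hm' : 0 ≤ m' ∧ m' ≤ p - 1)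
    (rm sm : ℤ) (hrm : 0 ≤ rm ∧ rm ≤ p - 1 ∧ 0 ≤ sm ∧ sm ≤ ℓ - 1 ∧ m = ℓ * rm - p * sm)
    (rm' sm' : ℤ)
    (hrm' : 0 ≤ rm' ∧ rm' ≤ p - 1 ∧ 0 ≤ sm' ∧ sm' ≤ ℓ - 1 ∧ m' = ℓ * rm' - p * sm')
    (r s θ : ℤ) (hx : (r, s, θ) ∈ SpectraSet p p')
    (hxm : 2 * m + 2 * p' - p = 2 * (r - 2 * θ) * p' - (2 * s + 1) * p)
    (r' s' θ' : ℤ) (hy : (r', s', θ') ∈ SpectraSet p p')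
    (hym : 2 * m' + 2 * p' - p = 2 * (r' - 2 * θ') * p' - (2 * s' + 1) * p) :
    ∑' x : SpectraSet p p',
        (Real.sin (π * ((p' : ℝ) / p) * r * x.1.1) : ℂ) *
          (Real.sin (π * ((p' : ℝ) / p) * r' * x.1.1) : ℂ) *
          Complex.exp ((π : ℂ) * Complex.I * ((p' : ℂ) / p) * ((rm : ℂ) - rm') *
            ((x.1.1 : ℂ) - 2 * x.1.2.2)) =
      if (r, s, θ) = (r', s', θ') then (p : ℂ) ^ 2 / 4 else 0 := by
  classical
  obtain ⟨hm0, hm1⟩ := hm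
  obtain ⟨hm'0, hm'1⟩ := hm'
  obtain ⟨hrm0, hrm1, hsm0, hsm1, hmeq⟩ := hrm
  obtain ⟨hrm'0, hrm'1, hsm'0, hsm'1, hm'eq⟩ := hrm'
  obtain ⟨hr1, hr2, hs1, hs2, -⟩ := hx
  obtain ⟨hr'1, hr'2, hs'1, hs'2, -⟩ := hy
  dsimp only at hr1 hr2 hs1 hs2 hr'1 hr'2 hs'1 hs'2
  have hp0 : (0:ℤ) < p := by omega
  have hpne : (p:ℤ) ≠ 0 := by omega
  -- the X values
  have hXeq : (r - 2*θ) * p' = m + p' + s * p := by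
    have h2 : (2:ℤ) * ((r - 2*θ) * p') = 2 * (m + p' + s * p) := by linear_combination -hxm
    exact mul_left_cancel₀ (by norm_num : (2:ℤ) ≠ 0) h2
  have hX'eq : (r' - 2*θ') * p' = m' + p' + s' * p := by
    have h2 : (2:ℤ) * ((r' - 2*θ') * p') = 2 * (m' + p' + s' * p) := by linear_combination -hym
    exact mul_left_cancel₀ (by norm_num : (2:ℤ) ≠ 0) h2
  obtain ⟨hX1, hX2⟩ := X_bounds hp hp' hXeq hm0 hm1 hs1 hs2
  obtain ⟨hX'1, hX'2⟩ := X_bounds hp hp' hX'eq hm'0 hm'1 hs'1 hs'2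
  have hrmX : rm = (r - 2*θ) - 1 := rm_eq hp hco hkl hXeq hX1 hX2 hmeq hrm0 hrm1
  have hrm'X : rm' = (r' - 2*θ') - 1 := rm_eq hp hco hkl hX'eq hX'1 hX'2 hm'eq hrm'0 hrm'1
  set D0 : ℤ := rm - rm' with hD0
  have hD0X : D0 = (r - 2*θ) - (r' - 2*θ') := by omega
  have hD0b : -(p-1) ≤ D0 ∧ D0 ≤ p - 1 := by omega
  have hD0par : 2 ∣ (r - r' - D0) := by omega
  -- the finite set
  set F : Finset (ℤ × ℤ × ℤ) :=
    ((Icc (1:ℤ) (p-1)) ×ˢ (Icc (0:ℤ) (p'-1)) ×ˢ (Icc (-p) p)).filter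
      (fun y => y ∈ SpectraSet p p') with hF
  have hSF : SpectraSet p p' = ↑F := by
    ext y
    simp only [hF, Finset.coe_filter, Set.mem_setOf_eq, Finset.mem_product, Finset.mem_Icc]
    constructor
    · intro hy0
      have hy0' := hy0
      obtain ⟨hc1, hc2, hc3, hc4, m₀, hm₀0, hm₀1, heq⟩ := hy0'
      have hXe : (y.1 - 2*y.2.2) * p' = m₀ + p' + y.2.1 * p := by
        have h2 : (2:ℤ) * ((y.1 - 2*y.2.2) * p') = 2 * (m₀ + p' + y.2.1 * p) := by
          linear_combination -heq
        exact mul_left_cancel₀ (by norm_num : (2:ℤ) ≠ 0) h2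
      obtain ⟨hb1, hb2⟩ := X_bounds hp hp' hXe hm₀0 hm₀1 hc3 hc4
      exact ⟨⟨⟨hc1, hc2⟩, ⟨hc3, hc4⟩, ⟨by omega, by omega⟩⟩, hy0⟩
    · exact fun h => h.2
  -- reduce the tsum to a finite sum
  rw [show (SpectraSet p p' : Set (ℤ × ℤ × ℤ)) = ↑F from hSF]
  rw [Finset.tsum_subtype' F (fun y => (Real.sin (π * ((p' : ℝ) / p) * r * y.1) : ℂ) *
        (Real.sin (π * ((p' : ℝ) / p) * r' * y.1) : ℂ) *
        Complex.exp ((π : ℂ) * Complex.I * ((p' : ℂ) / p) * ((rm : ℂ) - rm') *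
          ((y.1 : ℂ) - 2 * y.2.2)))]
  -- reparametrize by (r'', x'')
  set P : Finset (ℤ × ℤ) :=
    ((Icc (1:ℤ) (p-1)) ×ˢ (Icc (1:ℤ) p)).filter (fun y => 2 ∣ (y.1 + y.2)) with hP
  set u : ℤ → ℂ := fun a => (Real.sin (π * ((p' : ℝ) / p) * r * a) : ℂ) *
        (Real.sin (π * ((p' : ℝ) / p) * r' * a) : ℂ) with hu
  set v : ℤ → ℂ := fun b => ee p (p' * D0 * b) with hv
  have hbij : ∑ y ∈ F, ((Real.sin (π * ((p' : ℝ) / p) * r * y.1) : ℂ) *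
        (Real.sin (π * ((p' : ℝ) / p) * r' * y.1) : ℂ) *
        Complex.exp ((π : ℂ) * Complex.I * ((p' : ℂ) / p) * ((rm : ℂ) - rm') *
          ((y.1 : ℂ) - 2 * y.2.2))) = ∑ z ∈ P, u z.1 * v z.2 := by
    refine Finset.sum_bij' (fun y _ => (y.1, y.1 - 2 * y.2.2))
      (fun z _ => (z.1, ((z.2 - 1) * p') / p, (z.1 - z.2) / 2)) ?_ ?_ ?_ ?_ ?_
    · -- maps into P
      intro y hy
      simp only [hF, Finset.mem_filter, Finset.mem_product, Finset.mem_Icc] at hy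
      obtain ⟨⟨hyr, hys, hyθ⟩, hyS⟩ := hy
      obtain ⟨m₀, hm₀0, hm₀1, heq⟩ := hyS.2.2.2.2
      have hXe : (y.1 - 2*y.2.2) * p' = m₀ + p' + y.2.1 * p := by
        have h2 : (2:ℤ) * ((y.1 - 2*y.2.2) * p') = 2 * (m₀ + p' + y.2.1 * p) := by
          linear_combination -heq
        exact mul_left_cancel₀ (by norm_num : (2:ℤ) ≠ 0) h2
      obtain ⟨hb1, hb2⟩ := X_bounds hp hp' hXe hm₀0 hm₀1 hyS.2.2.1 hyS.2.2.2.1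
      simp only [hP, Finset.mem_filter, Finset.mem_product, Finset.mem_Icc]
      refine ⟨⟨⟨hyr.1, hyr.2⟩, ⟨hb1, hb2⟩⟩, ⟨y.1 - y.2.2, by ring⟩⟩
    · -- maps into F
      intro z hz
      simp only [hP, Finset.mem_filter, Finset.mem_product, Finset.mem_Icc] at hz
      obtain ⟨⟨⟨hz1, hz2⟩, hz3, hz4⟩, hz5⟩ := hz
      set q : ℤ := ((z.2 - 1) * p') / p with hq
      set m₀ : ℤ := ((z.2 - 1) * p') % p with hm₀
      have hqm : p * q + m₀ = (z.2 - 1) * p' := Int.mul_ediv_add_emod _ _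
      have hm₀0 : 0 ≤ m₀ := Int.emod_nonneg _ hpne
      have hm₀1 : m₀ < p := Int.emod_lt_of_pos _ hp0
      have hq0 : 0 ≤ q := Int.ediv_nonneg (mul_nonneg (by omega) (by omega)) (by omega)
      have hq1 : q ≤ p' - 1 := by
        have hle : (z.2 - 1) * p' ≤ (p - 1) + p * (p' - 1) := by
          have h3 := mul_le_mul_of_nonneg_right (show z.2 - 1 ≤ p - 1 by omega)
            (show (0:ℤ) ≤ p' by omega)
          have h5 : (p - 1) * p' + (p' - 1) = (p - 1) + p * (p' - 1) := by ring
          linarith only [h3, h5, hp']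
        have h2 := Int.ediv_le_ediv hp0 hle
        rwa [Int.add_mul_ediv_left _ _ hpne,
          Int.ediv_eq_zero_of_lt (show (0:ℤ) ≤ p - 1 by omega) (show p - 1 < p by omega),
          zero_add] at h2
      simp only [hF, Finset.mem_filter, Finset.mem_product, Finset.mem_Icc]
      have hzz : z.1 - 2 * ((z.1 - z.2) / 2) = z.2 := by omega
      refine ⟨⟨⟨hz1, hz2⟩, ⟨hq0, hq1⟩, ⟨by omega, by omega⟩⟩,
        ⟨hz1, hz2, hq0, hq1, ⟨m₀, by omega, by omega, ?_⟩⟩⟩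
      show 2 * m₀ + 2 * p' - p = 2 * (z.1 - 2 * ((z.1 - z.2) / 2)) * p' - (2 * q + 1) * p
      rw [hzz]
      linear_combination 2 * hqm
    · -- left inverse
      intro y hy
      simp only [hF, Finset.mem_filter, Finset.mem_product, Finset.mem_Icc] at hy
      obtain ⟨⟨hyr, hys, hyθ⟩, hyS⟩ := hy
      obtain ⟨m₀, hm₀0, hm₀1, heq⟩ := hyS.2.2.2.2
      have hXe : (y.1 - 2*y.2.2 - 1) * p' = m₀ + y.2.1 * p := by
        have h2 : (2:ℤ) * ((y.1 - 2*y.2.2 - 1) * p') = 2 * (m₀ + y.2.1 * p) := by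
          linear_combination -heq
        exact mul_left_cancel₀ (by norm_num : (2:ℤ) ≠ 0) h2
      have hdiv : (y.1 - 2*y.2.2 - 1) * p' / p = y.2.1 := by
        rw [hXe, Int.add_mul_ediv_right _ _ hpne,
          Int.ediv_eq_zero_of_lt (show (0:ℤ) ≤ m₀ by omega) (show m₀ < p by omega),
          zero_add]
      obtain ⟨y1, y2, y3⟩ := y
      simp only [Prod.mk.injEq, true_and] at hdiv ⊢
      exact ⟨hdiv, by omega⟩
    · -- right inverse
      intro z hz
      simp only [hP, Finset.mem_filter, Finset.mem_product, Finset.mem_Icc] at hz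
      obtain ⟨z1, z2⟩ := z
      simp only [Prod.mk.injEq, true_and] at hz ⊢
      omega
    · -- summand equality
      intro y hy
      beta_reduce
      rw [hu, hv]
      simp only
      congr 1
      rw [ee]
      congr 1
      push_cast [hD0]
      ring
  rw [hbij, hP]
  rw [filter_parity_sum p hp _ _ u v]
  -- identify the four sums
  have hsv : ∑ b ∈ Icc (1:ℤ) p, v b = GG p (p' * D0) := rfl
  have hsv2 : ∑ b ∈ Icc (1:ℤ) p, ee p (p * b) * v b = GG p (p' * D0 + p) := by
    rw [GG]
    refine Finset.sum_congr rfl fun b _ => ?_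
    rw [hv]
    simp only
    rw [← ee_add]
    congr 1
    ring
  have hsu : ∑ a ∈ Icc (1:ℤ) (p-1), u a =
      -(1/4) * (FF p (p' * (r + r')) + FF p (-(p' * (r + r'))) -
        FF p (p' * (r - r')) - FF p (-(p' * (r - r')))) := Ksum p p' r r'
  have hsu2 : ∑ a ∈ Icc (1:ℤ) (p-1), ee p (p * a) * u a =
      -(1/4) * (FF p (p' * (r + r') + p) + FF p (-(p' * (r + r') + p)) -
        FF p (p' * (r - r') + p) - FF p (-(p' * (r - r') + p))) := Ktsum p p' hp r r'
  rw [hsv, hsv2, hsu, hsu2]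
  rw [term1_eval hp hp' hco ⟨hr1, hr2⟩ ⟨hr'1, hr'2⟩ hD0b hD0par,
    term2_eval hp hp' hco ⟨hr1, hr2⟩ ⟨hr'1, hr'2⟩ hD0b hD0par]
  -- final: compare the conditions
  have hiff : (D0 = 0 ∧ r = r') ↔ (r, s, θ) = (r', s', θ') := by
    constructor
    · rintro ⟨hD, hrr⟩
      have hXX : r - 2*θ = r' - 2*θ' := by omega
      have hθ : θ = θ' := by omega
      have hw : m - m' = p * (s' - s) := by
        linear_combination -hXeq + hX'eq + p' * hXX
      have hmm : m - m' = 0 := Int.eq_zero_of_abs_lt_dvd ⟨s' - s, hw⟩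
        (abs_lt.mpr ⟨by omega, by omega⟩)
      have hps : p * (s' - s) = 0 := by rw [← hw]; omega
      have hss : s = s' := by
        rcases mul_eq_zero.mp hps with h | h
        · omega
        · omega
      simp only [Prod.mk.injEq]
      exact ⟨hrr, hss, hθ⟩
    · intro h
      simp only [Prod.mk.injEq] at h
      obtain ⟨h1, h2, h3⟩ := h
      exact ⟨by omega, h1⟩
  by_cases hc : (r, s, θ) = (r', s', θ')
  · rw [if_pos hc, if_pos (hiff.mpr hc)]
    ring
  · rw [if_neg hc, if_neg (fun h => hc (hiff.mp h))]
    ring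


end
end
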